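/- Upper bound on the circuit-component count (Appendix B, Eq. 27): for every natural number n, 40320 · s'(n) ≤ 1133233 · n!, i.e. s'(n) ≤ (1133233 / 8!) · n!. -/

import Mathlib

/-- `s' n` counts the distinct circuit components over `n` qubits
(ignoring the phase arguments of controlled-rotation gates):
`s' 0 = 1`, `s' 1 = 3`, and for `n ≥ 2`,
`s' n = 3·s'(n−1) + 2·(n−1)·s'(n−2) + Σ_{j=0}^{n−2} C(n−1,j)·(n−j)·s'(j)`. -/
def s' : ℕ → ℕ
  | 0 => 1
  | 1 => 3
  | n + 2 =>
    3 * s' (n + 1) + 2 * (n + 1) * s' n +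
      ∑ j : Fin (n + 1), (n + 1).choose j * (n + 2 - (j : ℕ)) * s' j

/-- The auxiliary sum `S m = ∑_{j=0}^{m} C(m+1,j)·(m+2−j)·j!`. -/
def SS (m : ℕ) : ℕ := ∑ j : Fin (m + 1), (m + 1).choose j * (m + 2 - (j : ℕ)) * (j : ℕ).factorial

lemma SS_rec (m : ℕ) : SS (m + 1) = (m + 2) * SS m + (m + 3) := by
  unfold SS
  rw [Fin.sum_univ_succAbove _ (0 : Fin (m + 2)), Finset.mul_sum]
  simp only [Fin.val_zero, Fin.succAbove_zero, Function.comp, Fin.val_succ]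
  have h0 : (m + 2).choose 0 * (m + 3 - 0) * Nat.factorial 0 = m + 3 := by simp
  rw [h0, add_comm ((m:ℕ) + 3)]
  congr 1
  apply Finset.sum_congr rfl
  intro j _
  have hchoose : (m + 2) * (m + 1).choose j = (m + 2).choose (j + 1) * (j + 1) := by
    simpa using (Nat.add_one_mul_choose_eq (m + 1) j)
  have hsub : m + 3 - ((j : ℕ) + 1) = m + 2 - (j : ℕ) := by omega
  rw [hsub, Nat.factorial_succ]
  calc (m + 2).choose ((j : ℕ) + 1) * (m + 2 - (j : ℕ)) * (((j : ℕ) + 1) * (j : ℕ).factorial)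
      = ((m + 2).choose ((j : ℕ) + 1) * ((j : ℕ) + 1)) * ((m + 2 - (j : ℕ)) * (j : ℕ).factorial) := by ring
    _ = ((m + 2) * (m + 1).choose j) * ((m + 2 - (j : ℕ)) * (j : ℕ).factorial) := by rw [hchoose]
    _ = (m + 2) * ((m + 1).choose j * (m + 2 - (j : ℕ)) * (j : ℕ).factorial) := by ring

lemma SS_bound (m : ℕ) (hm : 3 ≤ m) : 6 * SS m + 6 * (m + 3) ≤ 29 * (m + 1).factorial := by
  induction m with
  | zero => omega
  | succ k ih =>
    rcases Nat.lt_or_ge k 3 with hk | hk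
    · interval_cases k
      · omega
      · omega
      · -- k = 2, m = 3 : SS 3 = 105
        have h3 : SS 3 = 105 := by
          unfold SS
          norm_num [Fin.sum_univ_succ, Nat.factorial, Nat.choose]
        rw [h3]
        norm_num [Nat.factorial]
    · have ih' := ih hk
      rw [SS_rec]
      have hfac : (k + 2).factorial = (k + 2) * (k + 1).factorial := rfl
      have step : (k + 2) * (6 * SS k + 6 * (k + 3)) ≤ (k + 2) * (29 * (k + 1).factorial) :=
        Nat.mul_le_mul_left _ ih'
      have hside : 6 * (k + 3) + 6 * (k + 1 + 3) ≤ (k + 2) * (6 * (k + 3)) := by nlinarith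
      calc 6 * ((k + 2) * SS k + (k + 3)) + 6 * (k + 1 + 3)
          = (k + 2) * (6 * SS k) + (6 * (k + 3) + 6 * (k + 1 + 3)) := by ring
        _ ≤ (k + 2) * (6 * SS k) + (k + 2) * (6 * (k + 3)) := by omega
        _ = (k + 2) * (6 * SS k + 6 * (k + 3)) := by ring
        _ ≤ (k + 2) * (29 * (k + 1).factorial) := step
        _ = 29 * (k + 2).factorial := by rw [hfac]; ring

lemma key (m : ℕ) (hm : 8 ≤ m) :
    3 * (m + 1).factorial + 2 * (m + 1) * m.factorial + SS m ≤ (m + 2).factorial := by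
  have h1 : 6 * SS m ≤ 29 * (m + 1).factorial := by
    have := SS_bound m (by omega); omega
  have h2 : 2 * (m + 1) * m.factorial = 2 * (m + 1).factorial := by
    rw [Nat.factorial_succ]; ring
  have h3 : (m + 2).factorial = (m + 2) * (m + 1).factorial := rfl
  rw [h2, h3]
  have h4 : 59 * (m + 1).factorial ≤ 6 * ((m + 2) * (m + 1).factorial) := by
    have : 59 ≤ 6 * (m + 2) := by omega
    calc 59 * (m + 1).factorial ≤ (6 * (m + 2)) * (m + 1).factorial :=
          Nat.mul_le_mul_right _ this
      _ = 6 * ((m + 2) * (m + 1).factorial) := by ring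
  omega

lemma s'_zero : s' 0 = 1 := by simp [s']

lemma s'_one : s' 1 = 3 := by simp [s']

lemma s'_succ (n : ℕ) : s' (n + 2) = 3 * s' (n + 1) + 2 * (n + 1) * s' n +
    ∑ j : Fin (n + 1), (n + 1).choose j * (n + 2 - (j : ℕ)) * s' j := by
  rw [s']

lemma s'_two : s' 2 = 13 := by
  rw [s'_succ]; simp [Fin.sum_univ_succ, s'_zero, s'_one]

lemma s'_three : s' 3 = 66 := by
  rw [s'_succ]; simp [Fin.sum_univ_succ, s'_zero, s'_one, s'_two]

lemma s'_four : s' 4 = 385 := by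
  rw [s'_succ]; simp [Fin.sum_univ_succ, s'_zero, s'_one, s'_two, s'_three]

lemma s'_five : s' 5 = 2498 := by
  rw [s'_succ]; simp only [Fin.sum_univ_succ, Fin.sum_univ_zero, Fin.val_zero, Fin.val_succ]
  norm_num [Nat.choose, s'_zero, s'_one, s'_two, s'_three, s'_four]

lemma s'_six : s' 6 = 17775 := by
  rw [s'_succ]; simp only [Fin.sum_univ_succ, Fin.sum_univ_zero, Fin.val_zero, Fin.val_succ]
  norm_num [Nat.choose, s'_zero, s'_one, s'_two, s'_three, s'_four, s'_five]

lemma s'_seven : s' 7 = 136972 := by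
  rw [s'_succ]
  simp only [Fin.sum_univ_succ, Fin.sum_univ_zero, Fin.val_zero, Fin.val_succ]
  norm_num [Nat.choose, s'_zero, s'_one, s'_two, s'_three, s'_four, s'_five, s'_six]

lemma s'_eight : s' 8 = 1133233 := by
  rw [s'_succ]
  simp only [Fin.sum_univ_succ, Fin.sum_univ_zero, Fin.val_zero, Fin.val_succ]
  norm_num [Nat.choose, s'_zero, s'_one, s'_two, s'_three, s'_four, s'_five, s'_six, s'_seven]

lemma s'_nine : s' 9 = 9995130 := by
  rw [s'_succ]
  simp only [Fin.sum_univ_succ, Fin.sum_univ_zero, Fin.val_zero, Fin.val_succ]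
  norm_num [Nat.choose, s'_zero, s'_one, s'_two, s'_three, s'_four, s'_five, s'_six, s'_seven,
    s'_eight]

/-- **Upper bound on the circuit-component count (Appendix B, Eq. 27)**:
for every `n`, `s'(n) ≤ (1133233 / 8!) · n!`, i.e.
`40320 · s'(n) ≤ 1133233 · n!`. -/
theorem s'_le (n : ℕ) : 40320 * s' n ≤ 1133233 * n.factorial := by
  induction n using Nat.strong_induction_on with
  | _ n ih =>
    rcases Nat.lt_or_ge n 10 with hn | hn
    · interval_cases n <;>
        simp only [s'_zero, s'_one, s'_two, s'_three, s'_four, s'_five, s'_six, s'_seven,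
          s'_eight, s'_nine, Nat.factorial] <;> norm_num
    · obtain ⟨m, rfl⟩ : ∃ m, n = m + 2 := ⟨n - 2, by omega⟩
      have hm : 8 ≤ m := by omega
      have hs : s' (m + 2) = 3 * s' (m + 1) + 2 * (m + 1) * s' m +
          ∑ j : Fin (m + 1), (m + 1).choose j * (m + 2 - (j : ℕ)) * s' j := s'_succ m
      have hsum : 40320 * (∑ j : Fin (m + 1), (m + 1).choose j * (m + 2 - (j : ℕ)) * s' j)
          ≤ 1133233 * SS m := by
        rw [Finset.mul_sum]
        unfold SS
        rw [Finset.mul_sum]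
        apply Finset.sum_le_sum
        intro j _
        have hj := ih (j : ℕ) (by omega)
        calc 40320 * ((m + 1).choose j * (m + 2 - (j : ℕ)) * s' j)
            = ((m + 1).choose j * (m + 2 - (j : ℕ))) * (40320 * s' j) := by ring
          _ ≤ ((m + 1).choose j * (m + 2 - (j : ℕ))) * (1133233 * (j : ℕ).factorial) :=
              Nat.mul_le_mul_left _ hj
          _ = 1133233 * ((m + 1).choose j * (m + 2 - (j : ℕ)) * (j : ℕ).factorial) := by ring
      have h1 := ih (m + 1) (by omega)
      have h2 := ih m (by omega)
      have hk := key m hm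
      calc 40320 * s' (m + 2)
          = 3 * (40320 * s' (m + 1)) + 2 * (m + 1) * (40320 * s' m) +
            40320 * (∑ j : Fin (m + 1), (m + 1).choose j * (m + 2 - (j : ℕ)) * s' j) := by
            rw [hs]; ring
        _ ≤ 3 * (1133233 * (m + 1).factorial) + 2 * (m + 1) * (1133233 * m.factorial) +
            1133233 * SS m := by
            gcongr
        _ = 1133233 * (3 * (m + 1).factorial + 2 * (m + 1) * m.factorial + SS m) := by ring
        _ ≤ 1133233 * (m + 2).factorial := Nat.mul_le_mul_left _ hk
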